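/- Let n ≥ 1, r ≥ 1, m ≥ 1, and let a ∈ {0,r}^d. For all faces F^1,…,F^m of P(K_n) such that a lies in the Minkowski sum F^1 + ⋯ + F^m, there exist subsets S^1,…,S^m ⊆ [n] with a_{S^b} ∈ F^b for every b ∈ [m] (i.e. a_{S^b} is a vertex of F^b) and a = ∑_{b=1}^m a_{S^b}. -/

import Mathlib

/-- Edges of the complete graph `K_n`: 2-element subsets of `Fin n`,
encoded as non-diagonal elements of `Sym2 (Fin n)`. -/
abbrev EdgeKn (n : ℕ) : Type := {e : Sym2 (Fin n) // ¬ e.IsDiag}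

/-- Coordinates of `ℝ^d`, `d = n + n(n-1)/2`: vertices and edges of `K_n`. -/
abbrev CoordKn (n : ℕ) : Type := Fin n ⊕ EdgeKn n

/-- The edge coordinate `{i,j}` for distinct `i, j`. -/
def edgeCoord {n : ℕ} (i j : Fin n) (h : i ≠ j) : CoordKn n :=
  Sum.inr ⟨s(i, j), fun hd => h (Sym2.mk_isDiag_iff.mp hd)⟩

/-- The characteristic vector `a_S` of `S ⊆ [n]`. -/
def charVec {n : ℕ} (S : Finset (Fin n)) : CoordKn n → ℝ
  | Sum.inl i => if i ∈ S then 1 else 0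
  | Sum.inr e => Sym2.lift ⟨fun i j => if i ∈ S ∧ j ∈ S then (1 : ℝ) else 0,
      fun i j => by simp [and_comm]⟩ e.1

/-- The standard inner product on `ℝ^d`. -/
def dotP {n : ℕ} (x y : CoordKn n → ℝ) : ℝ := ∑ c, x c * y c

/-- `S` is in the demand set `D(w, p)`: it maximizes `⟨w - p, a_T⟩` over all `T ⊆ [n]`. -/
def InDemand {n : ℕ} (w p : CoordKn n → ℝ) (S : Finset (Fin n)) : Prop :=
  ∀ T : Finset (Fin n),
    dotP (fun c => w c - p c) (charVec T) ≤ dotP (fun c => w c - p c) (charVec S)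

/-- The correlation polytope `P(K_n)`. -/
def corrPolytope (n : ℕ) : Set (CoordKn n → ℝ) :=
  convexHull ℝ (Set.range (charVec (n := n)))

/-- The dilate `m·A` of a set `A ⊆ ℝ^d`. -/
def dilate {n : ℕ} (m : ℕ) (A : Set (CoordKn n → ℝ)) : Set (CoordKn n → ℝ) :=
  {x | ∃ y ∈ A, x = (m : ℝ) • y}

/-- `F` is a face of `P(K_n)`: the set of maximizers of some linear functional `⟨c, ·⟩`. -/
def IsFaceOf {n : ℕ} (F : Set (CoordKn n → ℝ)) : Prop :=
  ∃ c : CoordKn n → ℝ,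
    F = {x | x ∈ corrPolytope n ∧ ∀ y ∈ corrPolytope n, dotP c y ≤ dotP c x}

section Aux
variable {n : ℕ}
open Finset

lemma charVec_inl (S : Finset (Fin n)) (i : Fin n) :
    charVec S (Sum.inl i) = if i ∈ S then 1 else 0 := rfl

lemma charVec_edge (S : Finset (Fin n)) (i j : Fin n) (h : i ≠ j) :
    charVec S (edgeCoord i j h) = if i ∈ S ∧ j ∈ S then 1 else 0 := by
  simp [charVec, edgeCoord]

lemma edgeCoord_symm (i j : Fin n) (h : i ≠ j) :
    edgeCoord j i h.symm = edgeCoord i j h := by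
  simp only [edgeCoord]
  congr 1
  exact Subtype.ext (Sym2.eq_swap)

lemma edgeCoord_irrel (i j : Fin n) (h h' : i ≠ j) :
    edgeCoord i j h = edgeCoord i j h' := rfl

lemma charVec_empty : charVec (∅ : Finset (Fin n)) = 0 := by
  funext c
  rcases c with i | ⟨e, he⟩
  · simp [charVec]
  · induction e using Sym2.ind with
    | _ i j => simp [charVec]

lemma charVec_nonneg (S : Finset (Fin n)) (c : CoordKn n) : 0 ≤ charVec S c := by
  rcases c with i | ⟨e, he⟩
  · simp [charVec]; positivity
  · induction e using Sym2.ind with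
    | _ i j => simp [charVec]; positivity

lemma coord_cases (c : CoordKn n) :
    (∃ i, c = Sum.inl i) ∨ ∃ i j, ∃ h : i ≠ j, c = edgeCoord i j h := by
  rcases c with i | ⟨e, he⟩
  · exact Or.inl ⟨i, rfl⟩
  · induction e using Sym2.ind with
    | _ i j =>
      have h : i ≠ j := fun hij => he (by simp [hij])
      exact Or.inr ⟨i, j, h, by simp [edgeCoord]⟩

lemma dotP_sum_smul (c : CoordKn n → ℝ) (w : Finset (Fin n) → ℝ) :
    dotP c (∑ T, w T • charVec T) = ∑ T, w T * dotP c (charVec T) := by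
  simp only [dotP, Finset.sum_apply, Pi.smul_apply, smul_eq_mul, Finset.mul_sum]
  rw [Finset.sum_comm]
  congr 1; funext T; congr 1; funext k; ring

lemma exists_weights {x : CoordKn n → ℝ} (hx : x ∈ corrPolytope n) :
    ∃ w : Finset (Fin n) → ℝ,
      (∀ S, 0 ≤ w S) ∧ (∑ S, w S = 1) ∧ (∑ S, w S • charVec S = x) := by
  classical
  rw [corrPolytope, mem_convexHull_iff_exists_fintype] at hx
  obtain ⟨ι, _, v, z, hv0, hv1, hz, hzx⟩ := hx
  choose g hg using fun i => hz i
  refine ⟨fun S => ∑ i, if g i = S then v i else 0, fun S => ?_, ?_, ?_⟩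
  · exact Finset.sum_nonneg fun i _ => by split <;> simp [hv0 i]
  · rw [Finset.sum_comm]
    simpa [Finset.sum_ite_eq'] using hv1
  · rw [← hzx]
    simp only [Finset.sum_smul]
    rw [Finset.sum_comm]
    refine Finset.sum_congr rfl fun i _ => ?_
    have : ∀ S : Finset (Fin n),
        (if g i = S then v i else 0) • charVec S
          = if g i = S then v i • charVec S else 0 := by
      intro S; split <;> simp
    simp only [this]
    simp [Finset.sum_ite_eq', hg i]

end Aux

/-- **Proposition 4.2.** Let `a ∈ {0,r}^d`. For all faces `F^1, …, F^m` of
`P(K_n)` whose Minkowski sum contains `a`, there exist sets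
`S^1, …, S^m ⊆ [n]` with `a_{S^b} ∈ F^b` (a vertex of `F^b`) for every `b`
and `a = ∑_b a_{S^b}`. -/
theorem stmt9 (n r m : ℕ) (hn : 1 ≤ n) (hr : 1 ≤ r) (hm : 1 ≤ m)
    (a : CoordKn n → ℝ) (haval : ∀ c, a c = 0 ∨ a c = (r : ℝ))
    (F : Fin m → Set (CoordKn n → ℝ)) (hF : ∀ b, IsFaceOf (F b))
    (hsum : ∃ x : Fin m → (CoordKn n → ℝ), (∀ b, x b ∈ F b) ∧ (∑ b, x b) = a) :
    ∃ S : Fin m → Finset (Fin n),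
      (∀ b, charVec (S b) ∈ F b) ∧ (∑ b, charVec (S b)) = a := by
  
  classical
  obtain ⟨x, hxF, hxa⟩ := hsum
  choose c hc using hF
  have hxmem : ∀ b, x b ∈ corrPolytope n ∧
      ∀ y ∈ corrPolytope n, dotP (c b) y ≤ dotP (c b) (x b) := by
    intro b
    have := hxF b
    rw [hc b] at this
    exact this
  have hxP : ∀ b, x b ∈ corrPolytope n := fun b => (hxmem b).1
  have hxmax : ∀ b, ∀ y ∈ corrPolytope n, dotP (c b) y ≤ dotP (c b) (x b) :=
    fun b => (hxmem b).2
  choose w hw0 hw1 hwx using fun b => exists_weights (hxP b)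
  have hvP : ∀ S : Finset (Fin n), charVec S ∈ corrPolytope n :=
    fun S => subset_convexHull ℝ _ (Set.mem_range_self S)
  have hrne : (r : ℝ) ≠ 0 := by
    have : (0:ℝ) < r := by exact_mod_cast hr
    linarith
  -- supp sets give vertices of the faces
  have hface : ∀ b S, 0 < w b S → charVec S ∈ F b := by
    intro b S hpos
    have hle : ∀ T : Finset (Fin n), dotP (c b) (charVec T) ≤ dotP (c b) (x b) :=
      fun T => hxmax b _ (hvP T)
    have hsum0 : ∑ T : Finset (Fin n),
        w b T * (dotP (c b) (x b) - dotP (c b) (charVec T)) = 0 := by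
      simp only [mul_sub]
      rw [Finset.sum_sub_distrib, ← Finset.sum_mul, hw1 b, one_mul, ← dotP_sum_smul,
        hwx b, sub_self]
    have hzero := (Finset.sum_eq_zero_iff_of_nonneg
      (fun T _ => mul_nonneg (hw0 b T) (sub_nonneg.mpr (hle T)))).mp hsum0 S
      (Finset.mem_univ S)
    have heq : dotP (c b) (charVec S) = dotP (c b) (x b) := by
      rcases mul_eq_zero.mp hzero with h | h
      · exact absurd h (ne_of_gt hpos)
      · have := sub_eq_zero.mp h
        linarith
    rw [hc b]
    exact ⟨hvP S, fun y hy => heq ▸ hxmax b y hy⟩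
  -- coordinates of a as double sums
  have hcoord : ∀ k, a k = ∑ b, ∑ S, w b S * charVec S k := by
    intro k
    rw [← hxa]
    rw [Finset.sum_apply]
    refine Finset.sum_congr rfl fun b _ => ?_
    rw [← hwx b, Finset.sum_apply]
    refine Finset.sum_congr rfl fun S _ => ?_
    simp
  -- all terms of a zero double sum of nonnegatives vanish
  have hallzero : ∀ f : Fin m → Finset (Fin n) → ℝ, (∀ b S, 0 ≤ f b S) →
      (∑ b, ∑ S, f b S) = 0 → ∀ b S, f b S = 0 := by
    intro f hf h0 b S
    have houter := (Finset.sum_eq_zero_iff_of_nonneg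
      (fun b _ => Finset.sum_nonneg fun S _ => hf b S)).mp h0 b (Finset.mem_univ b)
    exact (Finset.sum_eq_zero_iff_of_nonneg (fun S _ => hf b S)).mp houter S
      (Finset.mem_univ S)
  have hzero_of : ∀ k, a k = 0 → ∀ b S, 0 < w b S → charVec S k = 0 := by
    intro k hk b S hpos
    have := hallzero (fun b S => w b S * charVec S k)
      (fun b S => mul_nonneg (hw0 b S) (charVec_nonneg S k))
      (by rw [← hcoord k, hk]) b S
    rcases mul_eq_zero.mp this with h | h
    · exact absurd h (ne_of_gt hpos)
    · exact h
  have hmem0 : ∀ (i : Fin n) b S, a (Sum.inl i) = 0 → 0 < w b S → i ∉ S := by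
    intro i b S h0 hpos hiS
    have := hzero_of _ h0 b S hpos
    rw [charVec_inl] at this
    simp [hiS] at this
  have hboth0 : ∀ (i j : Fin n) (h : i ≠ j) b S, a (edgeCoord i j h) = 0 →
      0 < w b S → ¬(i ∈ S ∧ j ∈ S) := by
    intro i j h b S h0 hpos hij
    have := hzero_of _ h0 b S hpos
    rw [charVec_edge] at this
    simp [hij.1, hij.2] at this
  have hexists : ∀ i : Fin n, a (Sum.inl i) = r → ∃ b S, 0 < w b S ∧ i ∈ S := by
    intro i hi
    by_contra hcon
    push_neg at hcon
    have h0 : a (Sum.inl i) = 0 := by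
      rw [hcoord]
      refine Finset.sum_eq_zero fun b _ => Finset.sum_eq_zero fun S _ => ?_
      rcases (hw0 b S).lt_or_eq with hpos | heq0
      · have hni : i ∉ S := fun hiS => (hcon b S hpos) hiS
        simp [charVec_inl, hni]
      · rw [← heq0, zero_mul]
    rw [h0] at hi
    exact hrne hi.symm
  have hedge_vertex : ∀ (i j : Fin n) (h : i ≠ j), a (edgeCoord i j h) = r →
      a (Sum.inl i) = r := by
    intro i j h he
    rcases haval (Sum.inl i) with h0 | hrr
    · exfalso
      have h0e : a (edgeCoord i j h) = 0 := by
        rw [hcoord]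
        refine Finset.sum_eq_zero fun b _ => Finset.sum_eq_zero fun S _ => ?_
        rcases (hw0 b S).lt_or_eq with hpos | heq0
        · have hni : i ∉ S := hmem0 i b S h0 hpos
          rw [charVec_edge]
          simp [hni]
        · rw [← heq0, zero_mul]
      rw [h0e] at he
      exact hrne he.symm
    · exact hrr
  have hiff : ∀ (i j : Fin n) (h : i ≠ j) b S, a (edgeCoord i j h) = r →
      0 < w b S → i ∈ S → j ∈ S := by
    intro i j h b S he hpos hiS
    by_contra hjS
    have hi : a (Sum.inl i) = r := hedge_vertex i j h he
    have hterm : ∀ S' : Finset (Fin n),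
        charVec S' (edgeCoord i j h) ≤ charVec S' (Sum.inl i) := by
      intro S'
      rw [charVec_inl, charVec_edge]
      by_cases h1 : i ∈ S' <;> by_cases h2 : j ∈ S' <;> simp [h1, h2]
    have h0 : ∑ b', ∑ S', w b' S' *
        (charVec S' (Sum.inl i) - charVec S' (edgeCoord i j h)) = 0 := by
      simp only [mul_sub, Finset.sum_sub_distrib]
      rw [← hcoord, ← hcoord, hi, he, sub_self]
    have := hallzero _ (fun b' S' => mul_nonneg (hw0 b' S')
      (sub_nonneg.mpr (hterm S'))) h0 b S
    rw [charVec_inl, charVec_edge] at this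
    simp [hiS, hjS] at this
    exact (ne_of_gt hpos) this
  have hmemiff : ∀ (i j : Fin n) (h : i ≠ j) b S, a (edgeCoord i j h) = r →
      0 < w b S → (i ∈ S ↔ j ∈ S) := by
    intro i j h b S he hpos
    constructor
    · exact hiff i j h b S he hpos
    · refine hiff j i h.symm b S ?_ hpos
      rw [edgeCoord_symm]
      exact he
  -- the relation R
  set R : Fin n → Fin n → Prop :=
    fun i j => i = j ∨ ∃ h : i ≠ j, a (edgeCoord i j h) = (r : ℝ) with hRdef
  have hRrefl : ∀ i, R i i := fun i => Or.inl rfl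
  have hRsymm : ∀ i j, R i j → R j i := by
    rintro i j (rfl | ⟨h, he⟩)
    · exact Or.inl rfl
    · refine Or.inr ⟨h.symm, ?_⟩
      rw [edgeCoord_symm]
      exact he
  have hRmemiff : ∀ i j b S, R i j → 0 < w b S → (i ∈ S ↔ j ∈ S) := by
    rintro i j b S (rfl | ⟨h, he⟩) hpos
    · exact Iff.rfl
    · exact hmemiff i j h b S he hpos
  have hRvertex : ∀ i j, R i j → a (Sum.inl i) = r → a (Sum.inl j) = r := by
    rintro i j (rfl | ⟨h, he⟩) hi
    · exact hi
    · refine hedge_vertex j i h.symm ?_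
      rw [edgeCoord_symm]
      exact he
  have hRtrans : ∀ i j l, R i j → R j l → R i l := by
    intro i j l hij hjl
    by_cases hil : i = l
    · exact Or.inl hil
    refine Or.inr ⟨hil, ?_⟩
    rcases haval (edgeCoord i l hil) with h0 | hrr
    · exfalso
      have hi : a (Sum.inl i) = r := by
        rcases hij with rfl | ⟨h, he⟩
        · rcases hjl with rfl | ⟨h, he⟩
          · exact absurd rfl hil
          · exact hedge_vertex i l h he
        · exact hedge_vertex i j h he
      obtain ⟨b, S, hpos, hiS⟩ := hexists i hi
      have hjS : j ∈ S := (hRmemiff i j b S hij hpos).mp hiS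
      have hlS : l ∈ S := (hRmemiff j l b S hjl hpos).mp hjS
      exact hboth0 i l hil b S h0 hpos ⟨hiS, hlS⟩
    · exact hrr
  -- classes
  set cls : Fin n → Finset (Fin n) := fun i => Finset.univ.filter (R i) with hclsdef
  have hclsR : ∀ i j, j ∈ cls i ↔ R i j := by
    intro i j
    simp [hclsdef]
  have hclsmem : ∀ i, i ∈ cls i := fun i => (hclsR i i).mpr (hRrefl i)
  have hRcls : ∀ i j, R i j → cls i = cls j := by
    intro i j hij
    ext z
    rw [hclsR, hclsR]
    exact ⟨fun h => hRtrans j i z (hRsymm i j hij) h, fun h => hRtrans i j z hij h⟩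
  have hsuppcls : ∀ b S (i : Fin n), 0 < w b S → i ∈ S → S = cls i := by
    intro b S i hpos hiS
    ext j
    rw [hclsR]
    constructor
    · intro hjS
      by_cases hij : i = j
      · exact Or.inl hij
      refine Or.inr ⟨hij, ?_⟩
      rcases haval (edgeCoord i j hij) with h0 | hrr
      · exact absurd ⟨hiS, hjS⟩ (hboth0 i j hij b S h0 hpos)
      · exact hrr
    · intro hR
      exact (hRmemiff i j b S hR hpos).mp hiS
  have hsuppT : ∀ b S (i : Fin n), 0 < w b S → i ∈ S → a (Sum.inl i) = r := by
    intro b S i hpos hiS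
    rcases haval (Sum.inl i) with h0 | hrr
    · exact absurd hiS (hmem0 i b S h0 hpos)
    · exact hrr
  -- column sums
  have hcol : ∀ i : Fin n, a (Sum.inl i) = r → ∑ b, w b (cls i) = (r : ℝ) := by
    intro i hi
    have hinner : ∀ b, ∑ S, w b S * charVec S (Sum.inl i) = w b (cls i) := by
      intro b
      rw [Finset.sum_eq_single (cls i)]
      · rw [charVec_inl]
        simp [hclsmem i]
      · intro S _ hne
        rcases (hw0 b S).lt_or_eq with hpos | heq0
        · have hni : i ∉ S := fun hiS => hne (hsuppcls b S i hpos hiS)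
          simp [charVec_inl, hni]
        · rw [← heq0, zero_mul]
      · intro habs
        exact absurd (Finset.mem_univ _) habs
    calc ∑ b, w b (cls i) = ∑ b, ∑ S, w b S * charVec S (Sum.inl i) := by
          exact Finset.sum_congr rfl fun b _ => (hinner b).symm
      _ = a (Sum.inl i) := (hcoord _).symm
      _ = r := hi
  set K : Finset (Finset (Fin n)) :=
    (Finset.univ.filter (fun i => a (Sum.inl i) = (r : ℝ))).image cls with hKdef
  have hKmem : ∀ C ∈ K, ∃ i : Fin n, a (Sum.inl i) = r ∧ cls i = C := by
    intro C hC
    rw [hKdef, Finset.mem_image] at hC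
    obtain ⟨i, hi, hcl⟩ := hC
    exact ⟨i, (Finset.mem_filter.mp hi).2, hcl⟩
  have hKcls : ∀ i : Fin n, a (Sum.inl i) = r → cls i ∈ K := by
    intro i hi
    rw [hKdef, Finset.mem_image]
    exact ⟨i, Finset.mem_filter.mpr ⟨Finset.mem_univ i, hi⟩, rfl⟩
  have hKne : ∀ C ∈ K, C ≠ ∅ := by
    intro C hC
    obtain ⟨i, _, rfl⟩ := hKmem C hC
    exact Finset.ne_empty_of_mem (hclsmem i)
  have hEmpK : ∅ ∉ K := fun hmem => (hKne ∅ hmem) rfl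
  have hcolK : ∀ C ∈ K, ∑ b, w b C = (r : ℝ) := by
    intro C hC
    obtain ⟨i, hi, rfl⟩ := hKmem C hC
    exact hcol i hi
  have hrow : ∀ b, w b ∅ + ∑ C ∈ K, w b C = 1 := by
    intro b
    have hs : ∑ S ∈ insert ∅ K, w b S = ∑ S, w b S := by
      apply Finset.sum_subset (Finset.subset_univ _)
      intro S _ hS
      by_contra hne
      have hpos : 0 < w b S := (hw0 b S).lt_of_ne (Ne.symm hne)
      rcases S.eq_empty_or_nonempty with rfl | ⟨i, hiS⟩
      · exact hS (Finset.mem_insert_self _ _)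
      · have hScls := hsuppcls b S i hpos hiS
        have hT := hsuppT b S i hpos hiS
        rw [hScls] at hS
        exact hS (Finset.mem_insert_of_mem (hKcls i hT))
    rw [Finset.sum_insert hEmpK] at hs
    rw [hs, hw1 b]
  have htot : ∑ b, ∑ C ∈ K, w b C = (K.card : ℝ) * r := by
    rw [Finset.sum_comm]
    rw [Finset.sum_congr rfl hcolK]
    rw [Finset.sum_const, nsmul_eq_mul]
  have hkrm : K.card * r ≤ m := by
    have hreal : ((K.card * r : ℕ) : ℝ) ≤ (m : ℝ) := by
      push_cast
      have hle1 : ∀ b : Fin m, ∑ C ∈ K, w b C ≤ 1 := by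
        intro b
        have := hrow b
        have := hw0 b ∅
        linarith
      calc (K.card : ℝ) * r = ∑ b, ∑ C ∈ K, w b C := htot.symm
        _ ≤ ∑ _b : Fin m, (1 : ℝ) := Finset.sum_le_sum fun b _ => hle1 b
        _ = m := by simp
    exact_mod_cast hreal
  have hemptycol : ∑ b, w b ∅ = (m : ℝ) - K.card * r := by
    have hsum1 : ∑ b, (w b ∅ + ∑ C ∈ K, w b C) = (m : ℝ) := by
      rw [Finset.sum_congr rfl (fun b _ => hrow b)]
      simp
    rw [Finset.sum_add_distrib, htot] at hsum1
    linarith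
  set cap : Finset (Fin n) → ℕ :=
    fun C => if C = ∅ then m - K.card * r else r with hcapdef
  have hcapsum : ∀ C ∈ insert ∅ K, ∑ b, w b C = (cap C : ℝ) := by
    intro C hC
    rcases Finset.mem_insert.mp hC with rfl | hCK
    · rw [hemptycol]
      have hcv : cap ∅ = m - K.card * r := by simp [hcapdef]
      rw [hcv, Nat.cast_sub hkrm]
      push_cast
      ring
    · have hcv : cap C = r := by simp [hcapdef, hKne C hCK]
      rw [hcv]
      exact hcolK C hCK
  set slots : Finset (Fin n) → Finset (Finset (Fin n) × ℕ) :=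
    fun C => ({C} : Finset (Finset (Fin n))) ×ˢ Finset.range (cap C) with hslotsdef
  have hslot_mem : ∀ C p, p ∈ slots C ↔ p.1 = C ∧ p.2 < cap C := by
    intro C p
    simp only [hslotsdef, Finset.mem_product, Finset.mem_singleton, Finset.mem_range]
  have hslot_card : ∀ C, (slots C).card = cap C := by
    intro C
    simp [hslotsdef]
  set t : Fin m → Finset (Finset (Fin n) × ℕ) :=
    fun b => ((insert ∅ K).filter (fun C => 0 < w b C)).biUnion slots with htdef
  have hslots_disj : ∀ C C' : Finset (Fin n), C ≠ C' → Disjoint (slots C) (slots C') := by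
    intro C C' hne
    rw [Finset.disjoint_left]
    intro p hp hp'
    rw [hslot_mem] at hp hp'
    exact hne (hp.1 ▸ hp'.1 ▸ rfl)
  have hHall : ∀ s : Finset (Fin m), s.card ≤ (s.biUnion t).card := by
    intro s
    set touched := (insert ∅ K).filter (fun C => ∃ b ∈ s, 0 < w b C) with htou
    have hbU : s.biUnion t = touched.biUnion slots := by
      ext p
      simp only [Finset.mem_biUnion, Finset.mem_filter, htdef, htou]
      constructor
      · rintro ⟨b, hbs, C, hC, hpC⟩
        exact ⟨C, ⟨hC.1, b, hbs, hC.2⟩, hpC⟩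
      · rintro ⟨C, ⟨hCK, b, hbs, hb⟩, hpC⟩
        exact ⟨b, hbs, C, ⟨hCK, hb⟩, hpC⟩
    rw [hbU, Finset.card_biUnion (fun C _ C' _ hne => hslots_disj C C' hne)]
    have hreal : (s.card : ℝ) ≤ ∑ C ∈ touched, (cap C : ℝ) := by
      have h1 : (s.card : ℝ) = ∑ b ∈ s, ∑ C ∈ insert ∅ K, w b C := by
        rw [Finset.sum_congr rfl
          (fun b _ => (Finset.sum_insert hEmpK).trans (hrow b))]
        simp
      rw [h1, Finset.sum_comm]
      have h3 : ∑ C ∈ insert ∅ K, ∑ b ∈ s, w b C = ∑ C ∈ touched, ∑ b ∈ s, w b C := by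
        symm
        apply Finset.sum_subset (Finset.filter_subset _ _)
        intro C hCK hCn
        refine Finset.sum_eq_zero fun b hbs => ?_
        rw [Finset.mem_filter] at hCn
        push_neg at hCn
        have hle := hCn hCK b hbs
        exact le_antisymm hle (hw0 b C)
      rw [h3]
      refine Finset.sum_le_sum fun C hC => ?_
      have hCK : C ∈ insert ∅ K := (Finset.mem_filter.mp hC).1
      calc ∑ b ∈ s, w b C ≤ ∑ b, w b C :=
            Finset.sum_le_sum_of_subset_of_nonneg (Finset.subset_univ s)
              (fun b _ _ => hw0 b C)
        _ = cap C := hcapsum C hCK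
    have hnat : s.card ≤ ∑ C ∈ touched, cap C := by
      have : (s.card : ℝ) ≤ ((∑ C ∈ touched, cap C : ℕ) : ℝ) := by
        push_cast
        exact hreal
      exact_mod_cast this
    calc s.card ≤ ∑ C ∈ touched, cap C := hnat
      _ = ∑ C ∈ touched, (slots C).card :=
          (Finset.sum_congr rfl fun C _ => (hslot_card C).symm)
  obtain ⟨f, hfinj, hft⟩ := (Finset.all_card_le_biUnion_card_iff_exists_injective t).mp hHall
  have hfb : ∀ b, (f b).1 ∈ insert ∅ K ∧ 0 < w b (f b).1 ∧ (f b).2 < cap (f b).1 := by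
    intro b
    have := hft b
    rw [htdef, Finset.mem_biUnion] at this
    obtain ⟨C, hC, hpC⟩ := this
    rw [Finset.mem_filter] at hC
    rw [hslot_mem] at hpC
    rw [hpC.1]
    exact ⟨hC.1, hC.2, hpC.1 ▸ hpC.2⟩
  refine ⟨fun b => (f b).1, fun b => hface b _ (hfb b).2.1, ?_⟩
  -- counting fibers
  set N : Finset (Fin n) → ℕ :=
    fun C => (Finset.univ.filter (fun b => (f b).1 = C)).card with hNdef
  have hNle : ∀ C, N C ≤ cap C := by
    intro C
    rw [hNdef]
    have : (Finset.univ.filter (fun b => (f b).1 = C)).card ≤ (Finset.range (cap C)).card := by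
      apply Finset.card_le_card_of_injOn (fun b => (f b).2)
      · intro b hb
        rw [Finset.mem_coe, Finset.mem_filter] at hb
        rw [Finset.mem_coe, Finset.mem_range, ← hb.2]
        exact (hfb b).2.2
      · intro b hb b' hb' heq2
        rw [Finset.coe_filter, Set.mem_setOf_eq] at hb hb'
        apply hfinj
        exact Prod.ext (hb.2.trans hb'.2.symm) heq2
    simpa using this
  have hNsum : ∑ C ∈ insert ∅ K, N C = m := by
    rw [hNdef]
    rw [← Finset.card_eq_sum_card_fiberwise (fun b _ => (hfb b).1)]
    simp
  have hcapS : ∑ C ∈ insert ∅ K, cap C = m := by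
    rw [Finset.sum_insert hEmpK]
    have hKsum : ∑ C ∈ K, cap C = K.card * r := by
      have hcv : ∀ C ∈ K, cap C = r := fun C hC => by simp [hcapdef, hKne C hC]
      rw [Finset.sum_congr rfl hcv, Finset.sum_const, smul_eq_mul]
    have hc0 : cap ∅ = m - K.card * r := by simp [hcapdef]
    rw [hKsum, hc0]
    exact Nat.sub_add_cancel hkrm
  have hNcap : ∀ C ∈ insert ∅ K, N C = cap C := by
    have := (Finset.sum_eq_sum_iff_of_le (fun C (_ : C ∈ insert ∅ K) => hNle C)).mp
      (hNsum.trans hcapS.symm)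
    exact fun C hC => this C hC
  -- final sum computation
  have hsplit : ∑ b, charVec ((f b).1) = ∑ C ∈ insert ∅ K, (N C) • charVec C := by
    rw [← Finset.sum_fiberwise_of_maps_to (fun b _ => (hfb b).1)
      (fun b => charVec ((f b).1))]
    refine Finset.sum_congr rfl fun C _ => ?_
    rw [Finset.sum_congr rfl (fun b hb => by
      rw [(Finset.mem_filter.mp hb).2])]
    rw [Finset.sum_const, hNdef]
  have hKr : ∑ C ∈ insert ∅ K, (N C) • charVec C = ∑ C ∈ K, r • charVec C := by
    rw [Finset.sum_insert hEmpK, charVec_empty, smul_zero, zero_add]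
    refine Finset.sum_congr rfl fun C hC => ?_
    rw [hNcap C (Finset.mem_insert_of_mem hC), hcapdef]
    simp [hKne C hC]
  rw [hsplit, hKr]
  -- it remains: ∑ C ∈ K, r • charVec C = a
  funext k
  rw [Finset.sum_apply]
  simp only [Pi.smul_apply, smul_eq_mul, nsmul_eq_mul]
  rcases coord_cases k with ⟨i, rfl⟩ | ⟨i, j, h, rfl⟩
  · rcases haval (Sum.inl i) with h0 | hrr
    · rw [h0]
      refine Finset.sum_eq_zero fun C hC => ?_
      suffices hni : i ∉ C by simp [charVec_inl, hni]
      intro hiC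
      obtain ⟨i₀, hi₀, rfl⟩ := hKmem C hC
      have hRi : R i₀ i := (hclsR i₀ i).mp hiC
      have : a (Sum.inl i) = r := hRvertex i₀ i hRi hi₀
      rw [h0] at this
      exact hrne this.symm
    · rw [hrr, Finset.sum_eq_single (cls i)]
      · rw [charVec_inl]
        simp [hclsmem i]
      · intro C hC hne
        suffices hni : i ∉ C by simp [charVec_inl, hni]
        intro hiC
        obtain ⟨i₀, _, rfl⟩ := hKmem C hC
        exact hne (hRcls i₀ i ((hclsR i₀ i).mp hiC))
      · intro habs
        exact absurd (hKcls i hrr) habs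
  · rcases haval (edgeCoord i j h) with h0 | hrr
    · rw [h0]
      refine Finset.sum_eq_zero fun C hC => ?_
      suffices hnij : ¬(i ∈ C ∧ j ∈ C) by
        rw [charVec_edge]
        simp [hnij]
      rintro ⟨hiC, hjC⟩
      obtain ⟨i₀, hi₀, rfl⟩ := hKmem C hC
      have hRij : R i j :=
        hRtrans i i₀ j (hRsymm i₀ i ((hclsR i₀ i).mp hiC)) ((hclsR i₀ j).mp hjC)
      rcases hRij with rfl | ⟨h', he'⟩
      · exact h rfl
      · rw [edgeCoord_irrel i j h h', h0] at he'
        exact hrne he'.symm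
    · rw [hrr]
      have hRij : R i j := Or.inr ⟨h, hrr⟩
      have hiT : a (Sum.inl i) = r := hedge_vertex i j h hrr
      rw [Finset.sum_eq_single (cls i)]
      · have hjc : j ∈ cls i := (hclsR i j).mpr hRij
        rw [charVec_edge]
        simp [hclsmem i, hjc]
      · intro C hC hne
        suffices hni : i ∉ C by
          rw [charVec_edge]
          simp [hni]
        intro hiC
        obtain ⟨i₀, _, rfl⟩ := hKmem C hC
        exact hne (hRcls i₀ i ((hclsR i₀ i).mp hiC))
      · intro habs
        exact absurd (hKcls i hiT) habs
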